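/- Let μ ∈ ℕ_0^n be a multi-index with Σ_i μ_i = 2d having exactly two odd entries, in positions i and j. Then the polynomial m_μ := binom(2d,μ)·x^μ − d·binom(d−1, (μ−ε_i−ε_j)/2)·(x_i^{2d−1}x_j + x_i x_j^{2d−1}) satisfies Δ^{d−1}(m_μ) = 0. -/

import Mathlib

open MvPolynomial

/-- The Laplacian operator `Δ = ∑ i, ∂²/∂xᵢ²` on `ℝ[x₁,…,xₙ]`. -/
noncomputable def lap {n : ℕ} (p : MvPolynomial (Fin n) ℝ) : MvPolynomial (Fin n) ℝ :=
  ∑ i, pderiv i (pderiv i p)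

variable {n : ℕ}

lemma lap_add (p q : MvPolynomial (Fin n) ℝ) : lap (p + q) = lap p + lap q := by
  simp [lap, Finset.sum_add_distrib]

lemma lap_smul (a : ℝ) (p : MvPolynomial (Fin n) ℝ) : lap (a • p) = a • lap p := by
  simp [lap, Finset.smul_sum]

lemma lap_zero : lap (0 : MvPolynomial (Fin n) ℝ) = 0 := by simp [lap]

lemma lap_sum {ι : Type*} (s : Finset ι) (f : ι → MvPolynomial (Fin n) ℝ) :
    lap (∑ k ∈ s, f k) = ∑ k ∈ s, lap (f k) := by
  classical
  induction s using Finset.induction with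
  | empty => simp [lap_zero]
  | insert _ _ h ih => simp [Finset.sum_insert h, lap_add, ih]

lemma lap_iter_zero (m : ℕ) : lap^[m] (0 : MvPolynomial (Fin n) ℝ) = 0 := by
  induction m with
  | zero => rfl
  | succ m ih => rw [Function.iterate_succ_apply, lap_zero, ih]

lemma lap_iter_smul (m : ℕ) (a : ℝ) (p : MvPolynomial (Fin n) ℝ) :
    lap^[m] (a • p) = a • lap^[m] p := by
  induction m generalizing p with
  | zero => rfl
  | succ m ih => rw [Function.iterate_succ_apply, lap_smul, ih, Function.iterate_succ_apply]

lemma lap_iter_sub (m : ℕ) (p q : MvPolynomial (Fin n) ℝ) :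
    lap^[m] (p - q) = lap^[m] p - lap^[m] q := by
  induction m generalizing p q with
  | zero => rfl
  | succ m ih =>
    rw [Function.iterate_succ_apply, Function.iterate_succ_apply,
      Function.iterate_succ_apply, ← ih]
    congr 1
    have : p - q = p + (-1 : ℝ) • q := by simp [sub_eq_add_neg]
    rw [this, lap_add, lap_smul]
    simp [sub_eq_add_neg]

lemma lap_iter_sum {ι : Type*} (m : ℕ) (s : Finset ι) (f : ι → MvPolynomial (Fin n) ℝ) :
    lap^[m] (∑ k ∈ s, f k) = ∑ k ∈ s, lap^[m] (f k) := by
  induction m generalizing f with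
  | zero => rfl
  | succ m ih =>
    rw [Function.iterate_succ_apply, lap_sum, ih]
    simp [Function.iterate_succ_apply]

lemma lap_monomial (s : Fin n →₀ ℕ) (a : ℝ) :
    lap (monomial s a) =
      ∑ k, monomial (s - Finsupp.single k 2) (a * ((s k * (s k - 1) : ℕ) : ℝ)) := by
  unfold lap
  refine Finset.sum_congr rfl fun k _ => ?_
  rw [pderiv_monomial, pderiv_monomial]
  congr 1
  · rw [tsub_tsub, ← Finsupp.single_add]
  · rw [Finsupp.tsub_apply, Finsupp.single_eq_same]
    push_cast [Nat.cast_sub]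
    ring_nf

lemma pascal {m : ℕ} (l : Fin n → ℕ) (h : ∑ k, l k = m + 1) :
    ∑ k ∈ Finset.univ.filter (fun k => l k ≠ 0),
      Nat.multinomial Finset.univ (fun x => l x - if x = k then 1 else 0)
      = Nat.multinomial Finset.univ l := by
  classical
  have hP : 0 < ∏ x, (l x).factorial := Finset.prod_pos fun x _ => Nat.factorial_pos _
  refine Nat.eq_of_mul_eq_mul_right hP ?_
  rw [Finset.sum_mul]
  have hrhs : Nat.multinomial Finset.univ l * ∏ x, (l x).factorial = (m + 1).factorial := by
    rw [mul_comm, Nat.multinomial_spec, h]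
  rw [hrhs]
  have hterm : ∀ k ∈ Finset.univ.filter (fun k => l k ≠ 0),
      Nat.multinomial Finset.univ (fun x => l x - if x = k then 1 else 0) *
        ∏ x, (l x).factorial = l k * m.factorial := by
    intro k hk
    rw [Finset.mem_filter] at hk
    have hk1 : 1 ≤ l k := Nat.one_le_iff_ne_zero.2 hk.2
    have hprod : ∏ x, (l x).factorial
        = l k * ∏ x, (l x - if x = k then 1 else 0).factorial := by
      have h1 : ∏ x, (l x).factorial
          = (l k).factorial * ∏ x ∈ Finset.univ.erase k, (l x).factorial :=
        (Finset.mul_prod_erase _ _ (Finset.mem_univ k)).symm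
      have h2 : ∏ x, (l x - if x = k then 1 else 0).factorial
          = (l k - 1).factorial * ∏ x ∈ Finset.univ.erase k, (l x).factorial := by
        rw [← Finset.mul_prod_erase _ _ (Finset.mem_univ k), if_pos rfl]
        congr 1
        refine Finset.prod_congr rfl fun x hx => ?_
        rw [if_neg (Finset.ne_of_mem_erase hx), Nat.sub_zero]
      rw [h1, h2, ← mul_assoc]
      congr 1
      exact (Nat.mul_factorial_pred (by omega)).symm
    have hsum' : ∑ x, (l x - if x = k then 1 else 0) = m := by
      have e2 : ∑ x ∈ Finset.univ.erase k, (l x - if x = k then 1 else 0)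
          = ∑ x ∈ Finset.univ.erase k, l x :=
        Finset.sum_congr rfl fun x hx => by
          rw [if_neg (Finset.ne_of_mem_erase hx), Nat.sub_zero]
      rw [← Finset.add_sum_erase _ _ (Finset.mem_univ k)] at h ⊢
      rw [e2, if_pos rfl]
      omega
    have hspec : (∏ x, (l x - if x = k then 1 else 0).factorial) *
        Nat.multinomial Finset.univ (fun x => l x - if x = k then 1 else 0)
        = m.factorial := by
      rw [Nat.multinomial_spec, hsum']
    calc Nat.multinomial Finset.univ (fun x => l x - if x = k then 1 else 0) *
          ∏ x, (l x).factorial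
        = Nat.multinomial Finset.univ (fun x => l x - if x = k then 1 else 0) *
          (l k * ∏ x, (l x - if x = k then 1 else 0).factorial) := by rw [hprod]
      _ = l k * ((∏ x, (l x - if x = k then 1 else 0).factorial) *
          Nat.multinomial Finset.univ (fun x => l x - if x = k then 1 else 0)) := by ring
      _ = l k * m.factorial := by rw [hspec]
  rw [Finset.sum_congr rfl hterm]
  rw [← Finset.sum_mul]
  have : ∑ k ∈ Finset.univ.filter (fun k => l k ≠ 0), l k = m + 1 := by
    rw [Finset.sum_filter_ne_zero]; exact h
  rw [this]
  rw [← Nat.factorial_succ]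

def lamf {n : ℕ} (i j : Fin n) (μ : Fin n → ℕ) : Fin n → ℕ :=
  fun x => (μ x - (if x = i then 1 else 0) - if x = j then 1 else 0) / 2

lemma main_lemma (i j : Fin n) (hij : i ≠ j) :
    ∀ (m : ℕ) (μ : Fin n → ℕ), (∑ k, μ k = 2 * m + 2) → Odd (μ i) → Odd (μ j) →
      (∀ k, k ≠ i → k ≠ j → Even (μ k)) → ∀ a : ℝ,
      lap^[m] (monomial (Finsupp.equivFunOnFinite.symm μ) a)
        = (a * ((Nat.multinomial Finset.univ (lamf i j μ) * ∏ k, (μ k).factorial : ℕ) : ℝ))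
            • (X i * X j) := by
  intro m
  induction m with
  | zero =>
    intro μ hsum hoi hoj heven a
    obtain ⟨ci, hci⟩ := hoi
    obtain ⟨cj, hcj⟩ := hoj
    have hle : ∀ k ∈ Finset.univ,
        (if k = i then 1 else 0) + (if k = j then 1 else 0) ≤ μ k := by
      intro k _
      by_cases hki : k = i
      · subst hki; rw [if_pos rfl, if_neg hij]; omega
      · by_cases hkj : k = j
        · subst hkj; rw [if_neg hki, if_pos rfl]; omega
        · simp [hki, hkj]
    have hs2 : ∑ k, ((if k = i then 1 else 0) + (if k = j then 1 else 0)) = 2 := by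
      rw [Finset.sum_add_distrib]
      simp [Finset.sum_ite_eq' Finset.univ i (fun _ => 1),
        Finset.sum_ite_eq' Finset.univ j (fun _ => 1)]
    have hkey : ∀ k ∈ Finset.univ,
        (if k = i then 1 else 0) + (if k = j then 1 else 0) = μ k :=
      (Finset.sum_eq_sum_iff_of_le hle).1 (by rw [hs2, hsum])
    have hfin : Finsupp.equivFunOnFinite.symm μ = Finsupp.single i 1 + Finsupp.single j 1 := by
      ext k
      have hk := hkey k (Finset.mem_univ k)
      simp only [Finsupp.coe_equivFunOnFinite_symm, Finsupp.add_apply,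
        Finsupp.single_apply]
      rw [← hk]
      congr 1
      · by_cases h : k = i
        · subst h; simp
        · rw [if_neg h, if_neg (fun hh => h hh.symm)]
      · by_cases h : k = j
        · subst h; simp
        · rw [if_neg h, if_neg (fun hh => h hh.symm)]
    have hlam : Nat.multinomial Finset.univ (lamf i j μ) = 1 := by
      have hz : lamf i j μ = fun _ => 0 := by
        funext k
        have hk := hkey k (Finset.mem_univ k)
        simp only [lamf]
        omega
      rw [hz]
      have hspec := Nat.multinomial_spec (Finset.univ : Finset (Fin n)) (fun _ : Fin n => (0 : ℕ))
      simpa using hspec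
    have hfac : ∏ k, (μ k).factorial = 1 := by
      apply Finset.prod_eq_one
      intro k _
      have hk := hkey k (Finset.mem_univ k)
      have h1 : μ k ≤ 1 := by
        have ha : (if k = i then 1 else 0) ≤ 1 := by split <;> omega
        have hb : (if k = j then 1 else 0) ≤ 1 := by split <;> omega
        have hc : ¬(k = i ∧ k = j) := fun ⟨h1, h2⟩ => hij (h1 ▸ h2 ▸ rfl)
        by_cases h : k = i
        · subst h; rw [if_pos rfl, if_neg hij] at hk; omega
        · rw [if_neg h] at hk; omega
      interval_cases h : μ k <;> simp
    rw [Function.iterate_zero_apply, hfin, hlam, hfac]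
    have hX : (X i * X j : MvPolynomial (Fin n) ℝ)
        = monomial (Finsupp.single i 1 + Finsupp.single j 1) 1 := by
      rw [← pow_one (X i : MvPolynomial (Fin n) ℝ), ← pow_one (X j : MvPolynomial (Fin n) ℝ),
        X_pow_eq_monomial, X_pow_eq_monomial, monomial_mul, one_mul]
    rw [hX, smul_monomial]
    norm_num
  | succ m ih =>
    intro μ hsum hoi hoj heven a
    obtain ⟨ci, hci⟩ := hoi
    obtain ⟨cj, hcj⟩ := hoj
    rw [Function.iterate_succ_apply, lap_monomial, lap_iter_sum]
    simp only [Finsupp.coe_equivFunOnFinite_symm]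
    have hterm : ∀ k ∈ Finset.univ,
        lap^[m] (monomial (Finsupp.equivFunOnFinite.symm μ - Finsupp.single k 2)
          (a * ((μ k * (μ k - 1) : ℕ) : ℝ)))
        = (a * ((μ k * (μ k - 1) *
            (Nat.multinomial Finset.univ (lamf i j (fun l => μ l - if l = k then 2 else 0)) *
             ∏ l, (μ l - if l = k then 2 else 0).factorial) : ℕ) : ℝ)) • (X i * X j) := by
      intro k _
      by_cases hk2 : 2 ≤ μ k
      · have hfin : Finsupp.equivFunOnFinite.symm μ - Finsupp.single k 2
            = Finsupp.equivFunOnFinite.symm (fun l => μ l - if l = k then 2 else 0) := by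
          ext l
          simp only [Finsupp.tsub_apply, Finsupp.coe_equivFunOnFinite_symm,
            Finsupp.single_apply]
          by_cases h : l = k
          · subst h; simp
          · rw [if_neg (fun hh => h hh.symm), if_neg h]
        rw [hfin]
        have hs' : ∑ l, (μ l - if l = k then 2 else 0) = 2 * m + 2 := by
          have hpt : ∀ l ∈ Finset.univ.erase k, μ l - (if l = k then 2 else 0) = μ l :=
            fun l hl => by rw [if_neg (Finset.ne_of_mem_erase hl), Nat.sub_zero]
          rw [← Finset.add_sum_erase _ _ (Finset.mem_univ k)] at hsum ⊢
          rw [Finset.sum_congr rfl hpt, if_pos rfl]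
          show μ k - 2 + ∑ x ∈ Finset.univ.erase k, μ x = 2 * m + 2
          omega
        have hoi' : Odd (μ i - if i = k then 2 else 0) := by
          by_cases h : i = k
          · rw [if_pos h]
            refine ⟨ci - 1, ?_⟩
            rw [← h] at hk2
            omega
          · rw [if_neg h, Nat.sub_zero]; exact ⟨ci, hci⟩
        have hoj' : Odd (μ j - if j = k then 2 else 0) := by
          by_cases h : j = k
          · rw [if_pos h]
            refine ⟨cj - 1, ?_⟩
            rw [← h] at hk2
            omega
          · rw [if_neg h, Nat.sub_zero]; exact ⟨cj, hcj⟩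
        have heven' : ∀ l, l ≠ i → l ≠ j → Even (μ l - if l = k then 2 else 0) := by
          intro l hli hlj
          obtain ⟨c, hc⟩ := heven l hli hlj
          by_cases h : l = k
          · subst h; rw [if_pos rfl]; exact ⟨c - 1, by omega⟩
          · rw [if_neg h, Nat.sub_zero]; exact ⟨c, hc⟩
        rw [ih (fun l => μ l - if l = k then 2 else 0) hs' hoi' hoj' heven'
          (a * ((μ k * (μ k - 1) : ℕ) : ℝ))]
        congr 1
        push_cast
        ring
      · have h0 : μ k * (μ k - 1) = 0 := by
          have h1 : μ k - 1 = 0 := by omega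
          rw [h1, mul_zero]
        rw [h0]
        simp [lap_iter_zero]
    rw [Finset.sum_congr rfl hterm, ← Finset.sum_smul]
    congr 1
    rw [← Finset.mul_sum, ← Nat.cast_sum]
    congr 2
    -- the key nat identity
    have hpt : ∀ k ∈ Finset.univ,
        μ k * (μ k - 1) *
          (Nat.multinomial Finset.univ (lamf i j (fun l => μ l - if l = k then 2 else 0)) *
           ∏ l, (μ l - if l = k then 2 else 0).factorial)
        = if lamf i j μ k ≠ 0 then
            Nat.multinomial Finset.univ (fun x => lamf i j μ x - if x = k then 1 else 0) *
              ∏ l, (μ l).factorial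
          else 0 := by
      intro k _
      by_cases hk2 : 2 ≤ μ k
      · have hlamk : lamf i j μ k ≠ 0 := by
          simp only [lamf]
          by_cases h : k = i
          · subst h; rw [if_pos rfl, if_neg hij]; omega
          · by_cases h2 : k = j
            · subst h2; rw [if_neg h, if_pos rfl]; omega
            · obtain ⟨c, hc⟩ := heven k h h2
              rw [if_neg h, if_neg h2]; omega
        rw [if_pos hlamk]
        have hlam' : lamf i j (fun l => μ l - if l = k then 2 else 0)
            = fun x => lamf i j μ x - if x = k then 1 else 0 := by
          funext x
          simp only [lamf]
          by_cases hx : x = k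
          · subst hx; rw [if_pos rfl, if_pos rfl]
            by_cases hxi : x = i
            · subst hxi; rw [if_pos rfl, if_neg hij]; omega
            · by_cases hxj : x = j
              · subst hxj; rw [if_neg hxi, if_pos rfl]; omega
              · obtain ⟨c, hc⟩ := heven x hxi hxj
                rw [if_neg hxi, if_neg hxj]; omega
          · rw [if_neg hx, if_neg hx, Nat.sub_zero, Nat.sub_zero]
        rw [hlam']
        have e1 : ∏ l, (μ l - if l = k then 2 else 0).factorial
            = (μ k - 2).factorial * ∏ l ∈ Finset.univ.erase k, (μ l).factorial := by
          rw [← Finset.mul_prod_erase _ _ (Finset.mem_univ k), if_pos rfl]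
          congr 1
          exact Finset.prod_congr rfl fun l hl => by
            rw [if_neg (Finset.ne_of_mem_erase hl), Nat.sub_zero]
        have e2 : ∏ l, (μ l).factorial
            = (μ k).factorial * ∏ l ∈ Finset.univ.erase k, (μ l).factorial :=
          (Finset.mul_prod_erase _ _ (Finset.mem_univ k)).symm
        rw [e1, e2]
        have h1 : (μ k - 1) * (μ k - 2).factorial = (μ k - 1).factorial := by
          have h2 : μ k - 2 = (μ k - 1) - 1 := by omega
          rw [h2]
          exact Nat.mul_factorial_pred (by omega)
        have h3 : μ k * (μ k - 1) * (μ k - 2).factorial = (μ k).factorial := by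
          rw [mul_assoc, h1]
          exact Nat.mul_factorial_pred (by omega)
        calc μ k * (μ k - 1) *
              (Nat.multinomial Finset.univ (fun x => lamf i j μ x - if x = k then 1 else 0) *
               ((μ k - 2).factorial * ∏ l ∈ Finset.univ.erase k, (μ l).factorial))
            = Nat.multinomial Finset.univ (fun x => lamf i j μ x - if x = k then 1 else 0) *
              ((μ k * (μ k - 1) * (μ k - 2).factorial) *
                ∏ l ∈ Finset.univ.erase k, (μ l).factorial) := by ring
          _ = _ := by rw [h3]
      · have h0 : μ k * (μ k - 1) = 0 := by
          have h1 : μ k - 1 = 0 := by omega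
          rw [h1, mul_zero]
        have hlamk : lamf i j μ k = 0 := by
          simp only [lamf]
          by_cases h : k = i
          · subst h; rw [if_pos rfl, if_neg hij]; omega
          · by_cases h2 : k = j
            · subst h2; rw [if_neg h, if_pos rfl]; omega
            · rw [if_neg h, if_neg h2]; omega
        rw [h0, zero_mul, if_neg (by simp [hlamk])]
    rw [Finset.sum_congr rfl hpt, ← Finset.sum_filter, ← Finset.sum_mul]
    have hlsum : ∑ k, lamf i j μ k = m + 1 := by
      have hpt2 : ∀ k ∈ Finset.univ, μ k = 2 * lamf i j μ k +
          ((if k = i then 1 else 0) + (if k = j then 1 else 0)) := by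
        intro k _
        simp only [lamf]
        by_cases h : k = i
        · subst h; rw [if_pos rfl, if_neg hij]; omega
        · by_cases h2 : k = j
          · subst h2; rw [if_neg h, if_pos rfl]; omega
          · obtain ⟨c, hc⟩ := heven k h h2
            rw [if_neg h, if_neg h2]; omega
      rw [Finset.sum_congr rfl hpt2, Finset.sum_add_distrib, ← Finset.mul_sum,
        Finset.sum_add_distrib] at hsum
      simp only [Finset.sum_ite_eq' Finset.univ i (fun _ => 1),
        Finset.sum_ite_eq' Finset.univ j (fun _ => 1), Finset.mem_univ, if_pos] at hsum
      omega
    rw [pascal (lamf i j μ) hlsum]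

lemma lap_iter_add (m : ℕ) (p q : MvPolynomial (Fin n) ℝ) :
    lap^[m] (p + q) = lap^[m] p + lap^[m] q := by
  induction m generalizing p q with
  | zero => rfl
  | succ m ih => rw [Function.iterate_succ_apply, lap_add, ih,
      Function.iterate_succ_apply, Function.iterate_succ_apply]

lemma prod_pow_eq (μ : Fin n → ℕ) :
    ∏ k, (X k : MvPolynomial (Fin n) ℝ) ^ μ k
      = monomial (Finsupp.equivFunOnFinite.symm μ) 1 := by
  have h1 : ∏ x ∈ (Finsupp.equivFunOnFinite.symm μ).support,
        (X x : MvPolynomial (Fin n) ℝ) ^ (Finsupp.equivFunOnFinite.symm μ) x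
      = ∏ x : Fin n, (X x : MvPolynomial (Fin n) ℝ) ^ (Finsupp.equivFunOnFinite.symm μ) x :=
    Finset.prod_subset (Finset.subset_univ _) (fun x _ hx => by
      rw [Finsupp.notMem_support_iff.mp hx, pow_zero])
  rw [← prod_X_pow_eq_monomial, ← h1.symm]
  exact Finset.prod_congr rfl fun x _ => by rw [Finsupp.coe_equivFunOnFinite_symm]

lemma mult_single (i : Fin n) (c : ℕ) :
    Nat.multinomial Finset.univ (fun k => if k = i then c else 0) = 1 := by
  have hspec := Nat.multinomial_spec Finset.univ (fun k : Fin n => if k = i then c else 0)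
  have hprod : ∏ k, (if k = i then c else 0).factorial = c.factorial := by
    refine Finset.prod_eq_single i (fun b _ hb => by rw [if_neg hb]; rfl)
      (fun h => absurd (Finset.mem_univ i) h) |>.trans ?_
    rw [if_pos rfl]
  have hsum : ∑ k, (if k = i then c else 0) = c := by
    simp [Finset.sum_ite_eq' Finset.univ i (fun _ => c)]
  rw [hprod, hsum] at hspec
  have := Nat.factorial_pos c
  nlinarith [Nat.factorial_pos c]


/-- **Statement 8.** If `μ ∈ ℕ₀ⁿ` sums to `2d` and has exactly two odd entries, in
positions `i` and `j`, then the polynomial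
`m_μ = binom(2d,μ)·xᵘ − d·binom(d−1,(μ−εᵢ−εⱼ)/2)·(xᵢ^{2d−1}xⱼ + xᵢxⱼ^{2d−1})`
satisfies `Δ^{d−1}(m_μ) = 0`. -/
theorem stmt8 {n d : ℕ} (hd : 1 ≤ d) (μ : Fin n → ℕ) (hsum : ∑ i, μ i = 2 * d)
    (i j : Fin n) (hij : i ≠ j) (hoi : Odd (μ i)) (hoj : Odd (μ j))
    (heven : ∀ k, k ≠ i → k ≠ j → Even (μ k)) :
    lap^[d - 1]
      ((Nat.multinomial Finset.univ μ : ℝ) • ∏ k, (X k : MvPolynomial (Fin n) ℝ) ^ μ k -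
        ((d : ℝ) * Nat.multinomial Finset.univ
            (fun k => (μ k - (if k = i then 1 else 0) - if k = j then 1 else 0) / 2)) •
          ((X i : MvPolynomial (Fin n) ℝ) ^ (2 * d - 1) * X j +
            X i * (X j : MvPolynomial (Fin n) ℝ) ^ (2 * d - 1))) = 0 := by
  set μ1 : Fin n → ℕ := fun k => (if k = i then 2 * d - 1 else 0) + (if k = j then 1 else 0)
    with hμ1
  set μ2 : Fin n → ℕ := fun k => (if k = i then 1 else 0) + (if k = j then 2 * d - 1 else 0)
    with hμ2
  have h1 : (X i : MvPolynomial (Fin n) ℝ) ^ (2 * d - 1) * X j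
      = monomial (Finsupp.equivFunOnFinite.symm μ1) 1 := by
    have hfin : Finsupp.equivFunOnFinite.symm μ1
        = Finsupp.single i (2 * d - 1) + Finsupp.single j 1 := by
      ext l
      simp only [Finsupp.coe_equivFunOnFinite_symm, Finsupp.add_apply,
        Finsupp.single_apply, hμ1]
      congr 1
      · by_cases h : l = i
        · subst h; simp
        · rw [if_neg h, if_neg (fun hh => h hh.symm)]
      · by_cases h : l = j
        · subst h; simp
        · rw [if_neg h, if_neg (fun hh => h hh.symm)]
    rw [hfin, ← pow_one (X j : MvPolynomial (Fin n) ℝ), X_pow_eq_monomial, X_pow_eq_monomial,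
      monomial_mul, one_mul]
  have h2 : (X i : MvPolynomial (Fin n) ℝ) * X j ^ (2 * d - 1)
      = monomial (Finsupp.equivFunOnFinite.symm μ2) 1 := by
    have hfin : Finsupp.equivFunOnFinite.symm μ2
        = Finsupp.single i 1 + Finsupp.single j (2 * d - 1) := by
      ext l
      simp only [Finsupp.coe_equivFunOnFinite_symm, Finsupp.add_apply,
        Finsupp.single_apply, hμ2]
      congr 1
      · by_cases h : l = i
        · subst h; simp
        · rw [if_neg h, if_neg (fun hh => h hh.symm)]
      · by_cases h : l = j
        · subst h; simp
        · rw [if_neg h, if_neg (fun hh => h hh.symm)]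
    rw [hfin, ← pow_one (X i : MvPolynomial (Fin n) ℝ), X_pow_eq_monomial, X_pow_eq_monomial,
      monomial_mul, one_mul]
  rw [prod_pow_eq μ, h1, h2, lap_iter_sub, lap_iter_smul, lap_iter_smul, lap_iter_add]
  -- apply the main lemma three times
  have hm1 : lap^[d - 1] (monomial (Finsupp.equivFunOnFinite.symm μ) (1 : ℝ))
      = ((1 : ℝ) * ((Nat.multinomial Finset.univ (lamf i j μ) * ∏ k, (μ k).factorial : ℕ) : ℝ))
        • (X i * X j) :=
    main_lemma i j hij (d - 1) μ (by omega) hoi hoj heven 1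
  have hμ1i : μ1 i = 2 * d - 1 := by rw [hμ1]; simp [hij]
  have hμ1j : μ1 j = 1 := by rw [hμ1]; simp [Ne.symm hij]
  have hμ2i : μ2 i = 1 := by rw [hμ2]; simp [hij]
  have hμ2j : μ2 j = 2 * d - 1 := by rw [hμ2]; simp [Ne.symm hij]
  have hs1 : ∑ k, μ1 k = 2 * (d - 1) + 2 := by
    rw [hμ1, Finset.sum_add_distrib]
    rw [Finset.sum_ite_eq' Finset.univ i (fun _ => 2 * d - 1),
      Finset.sum_ite_eq' Finset.univ j (fun _ => 1)]
    simp only [Finset.mem_univ, if_pos]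
    omega
  have hs2 : ∑ k, μ2 k = 2 * (d - 1) + 2 := by
    rw [hμ2, Finset.sum_add_distrib]
    rw [Finset.sum_ite_eq' Finset.univ i (fun _ => 1),
      Finset.sum_ite_eq' Finset.univ j (fun _ => 2 * d - 1)]
    simp only [Finset.mem_univ, if_pos]
    omega
  have hm2 : lap^[d - 1] (monomial (Finsupp.equivFunOnFinite.symm μ1) (1 : ℝ))
      = ((1 : ℝ) *
          ((Nat.multinomial Finset.univ (lamf i j μ1) * ∏ k, (μ1 k).factorial : ℕ) : ℝ))
        • (X i * X j) :=
    main_lemma i j hij (d - 1) μ1 hs1 (by rw [hμ1i]; exact ⟨d - 1, by omega⟩)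
      (by rw [hμ1j]; exact ⟨0, by omega⟩)
      (fun k hki hkj => by rw [hμ1]; simp [hki, hkj]) 1
  have hm3 : lap^[d - 1] (monomial (Finsupp.equivFunOnFinite.symm μ2) (1 : ℝ))
      = ((1 : ℝ) *
          ((Nat.multinomial Finset.univ (lamf i j μ2) * ∏ k, (μ2 k).factorial : ℕ) : ℝ))
        • (X i * X j) :=
    main_lemma i j hij (d - 1) μ2 hs2 (by rw [hμ2i]; exact ⟨0, by omega⟩)
      (by rw [hμ2j]; exact ⟨d - 1, by omega⟩)
      (fun k hki hkj => by rw [hμ2]; simp [hki, hkj]) 1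
  -- compute the coefficients for the two special monomials
  have hlam1 : lamf i j μ1 = fun k => if k = i then d - 1 else 0 := by
    funext x
    simp only [lamf, hμ1]
    by_cases hxi : x = i
    · by_cases hxj : x = j
      · exact absurd (hxi.symm.trans hxj) hij
      · simp [hxi, hij] <;> omega
    · by_cases hxj : x = j
      · simp [hxj, Ne.symm hij] <;> omega
      · simp only [if_neg hxi, if_neg hxj]
  have hlam2 : lamf i j μ2 = fun k => if k = j then d - 1 else 0 := by
    funext x
    simp only [lamf, hμ2]
    by_cases hxi : x = i
    · by_cases hxj : x = j
      · exact absurd (hxi.symm.trans hxj) hij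
      · simp [hxi, hij] <;> omega
    · by_cases hxj : x = j
      · simp [hxj, Ne.symm hij] <;> omega
      · simp only [if_neg hxi, if_neg hxj]
  have hmult2 : Nat.multinomial Finset.univ (lamf i j μ2) = 1 := by
    rw [hlam2]; exact mult_single j (d - 1)
  have hmult1 : Nat.multinomial Finset.univ (lamf i j μ1) = 1 := by
    rw [hlam1]; exact mult_single i (d - 1)
  have hfac1 : ∏ k, (μ1 k).factorial = (2 * d - 1).factorial := by
    refine Finset.prod_eq_single i (fun b _ hb => ?_)
      (fun h => absurd (Finset.mem_univ i) h) |>.trans (by rw [hμ1i])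
    by_cases hbj : b = j
    · subst hbj; simp [hμ1j]
    · rw [hμ1]; simp [hb, hbj]
  have hfac2 : ∏ k, (μ2 k).factorial = (2 * d - 1).factorial := by
    refine Finset.prod_eq_single j (fun b _ hb => ?_)
      (fun h => absurd (Finset.mem_univ j) h) |>.trans (by rw [hμ2j])
    by_cases hbi : b = i
    · subst hbi; simp [hμ2i]
    · rw [hμ2]; simp [hb, hbi]
  rw [hm1, hm2, hm3, hmult1, hmult2, hfac1, hfac2]
  have hlamdef : (fun k => (μ k - (if k = i then 1 else 0) - if k = j then 1 else 0) / 2)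
      = lamf i j μ := rfl
  rw [hlamdef]
  simp only [smul_add, smul_smul]
  rw [← add_smul, ← sub_smul]
  refine smul_eq_zero_of_left ?_ _
  have hMF : Nat.multinomial Finset.univ μ *
      (Nat.multinomial Finset.univ (lamf i j μ) * ∏ k, (μ k).factorial)
      = d * Nat.multinomial Finset.univ (lamf i j μ) *
        ((1 * (2 * d - 1).factorial) + 1 * (2 * d - 1).factorial) := by
    have hspec := Nat.multinomial_spec Finset.univ μ
    rw [hsum] at hspec
    have hfs : (2 * d).factorial = 2 * d * (2 * d - 1).factorial := by
      have h2d : 2 * d = (2 * d - 1) + 1 := by omega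
      conv_lhs => rw [h2d]
      rw [Nat.factorial_succ, ← h2d]
    calc Nat.multinomial Finset.univ μ *
          (Nat.multinomial Finset.univ (lamf i j μ) * ∏ k, (μ k).factorial)
        = Nat.multinomial Finset.univ (lamf i j μ) *
          ((∏ k, (μ k).factorial) * Nat.multinomial Finset.univ μ) := by ring
      _ = Nat.multinomial Finset.univ (lamf i j μ) * (2 * d).factorial := by rw [hspec]
      _ = _ := by rw [hfs]; ring
  have hc := congrArg (Nat.cast (R := ℝ)) hMF
  push_cast at hc ⊢
  linarith
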